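/- Let L be holomorphic on an open set containing the closed unit disk, and let a, b ∈ ℂ with |a|² − |b|² = 1. Then ∫_{|w|<1} L'(w) · (2b/(conj(a) − b·conj(w))) d²w = 2π (L(b/conj(a)) − L(0)). -/

import Mathlib

open MeasureTheory Complex Set Metric

open scoped Real

theorem moebius_kernel_integral (U : Set ℂ) (hU : IsOpen U)
    (hDU : {z : ℂ | ‖z‖ ≤ 1} ⊆ U)
    (L : ℂ → ℂ) (hL : DifferentiableOn ℂ L U)
    (a b : ℂ) (hab : ‖a‖ ^ 2 - ‖b‖ ^ 2 = 1) :
    (∫ w in {w : ℂ | ‖w‖ < 1},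
        deriv L w * (2 * b / ((starRingEnd ℂ) a - b * (starRingEnd ℂ) w))) =
      2 * (Real.pi : ℂ) * (L (b / (starRingEnd ℂ) a) - L 0) := by
  have hπ : (0:ℝ) < Real.pi := Real.pi_pos
  set g : ℂ → ℂ := fun w => deriv L w * (2 * b / ((starRingEnd ℂ) a - b * (starRingEnd ℂ) w))
    with hgdef
  have hba : ‖b‖ < ‖a‖ := by
    nlinarith [norm_nonneg a, norm_nonneg b]
  have haa : 0 < ‖a‖ := lt_of_le_of_lt (norm_nonneg b) hba
  have ha0 : a ≠ 0 := by
    intro h; rw [h] at haa; simp at haa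
  have hca0 : (starRingEnd ℂ) a ≠ 0 := by simpa using ha0
  set c : ℂ := b / (starRingEnd ℂ) a with hcdef
  have hcabs : ‖c‖ < 1 := by
    rw [hcdef, norm_div, Complex.norm_conj]
    exact (div_lt_one haa).2 hba
  have hden : ∀ w : ℂ, ‖w‖ ≤ 1 → (starRingEnd ℂ) a - b * (starRingEnd ℂ) w ≠ 0 := by
    intro w hw h
    rw [sub_eq_zero] at h
    have h2 := congrArg norm h
    rw [Complex.norm_conj, norm_mul, Complex.norm_conj] at h2
    nlinarith [norm_nonneg b, norm_nonneg w]
  -- analyticity of `L` and its derivative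
  have hAn : AnalyticOnNhd ℂ L U := hL.analyticOnNhd hU
  have hD1 : DifferentiableOn ℂ (deriv L) U := hAn.deriv.differentiableOn
  have hC1 : ContinuousOn (deriv L) U := hD1.continuousOn
  have hgc : ContinuousOn g {w : ℂ | ‖w‖ ≤ 1} := by
    apply (hC1.mono hDU).mul
    apply ContinuousOn.div continuousOn_const
    · exact (continuousOn_const.sub (continuousOn_const.mul Complex.continuous_conj.continuousOn))
    · exact fun w hw => hden w hw
  have hset : {w : ℂ | ‖w‖ < 1} = Metric.ball (0:ℂ) 1 := by
    ext w; simp [Metric.mem_ball, Complex.dist_eq]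
  have hsymm_cont : Continuous (Complex.polarCoord.symm : ℝ × ℝ → ℂ) := by
    have : (Complex.polarCoord.symm : ℝ × ℝ → ℂ)
        = fun p => p.1 * (Real.cos p.2 + Real.sin p.2 * Complex.I) :=
      funext Complex.polarCoord_symm_apply
    rw [this]; fun_prop
  set F : ℝ × ℝ → ℂ := fun p => p.1 • g (Complex.polarCoord.symm p) with hFdef
  have hcontF : ContinuousOn F (Set.Icc (0:ℝ) 1 ×ˢ Set.Icc (-π) π) := by
    apply (continuous_fst.continuousOn.smul
      (hgc.comp hsymm_cont.continuousOn ?_))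
    intro p hp
    simp only [Set.mem_setOf_eq, Complex.norm_polarCoord_symm]
    rw [_root_.abs_of_nonneg hp.1.1]
    exact hp.1.2
  have hFint : IntegrableOn F (Set.Ioo (0:ℝ) 1 ×ˢ Set.Ioo (-π) π) := by
    apply (hcontF.integrableOn_compact (isCompact_Icc.prod isCompact_Icc)).mono_set
    exact Set.prod_mono Set.Ioo_subset_Icc_self Set.Ioo_subset_Icc_self
  have hsetEq : polarCoord.target ∩ (Complex.polarCoord.symm ⁻¹' Metric.ball (0:ℂ) 1)
      = Set.Ioo (0:ℝ) 1 ×ˢ Set.Ioo (-π) π := by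
    ext p
    simp only [polarCoord_target, Set.mem_inter_iff, Set.mem_prod, Set.mem_Ioi, Set.mem_Ioo,
      Set.mem_preimage, Metric.mem_ball, Complex.dist_eq, sub_zero, Complex.norm_polarCoord_symm]
    constructor
    · rintro ⟨⟨h1, h2⟩, h3⟩
      exact ⟨⟨h1, (abs_lt.1 h3).2⟩, h2⟩
    · rintro ⟨⟨h1, h2⟩, h3⟩
      exact ⟨⟨h1, h3⟩, by rwa [_root_.abs_of_pos h1]⟩
  -- the key inner (angular) integral computation
  have key : ∀ r : ℝ, r ∈ Set.Ioo (0:ℝ) 1 →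
      (∫ θ in Set.Ioo (-π) π, F (r, θ))
        = r • ((2 * (π:ℝ) * Complex.I) *
            ((2 * b / ((starRingEnd ℂ) a) / Complex.I) * deriv L (c * (r:ℂ)^2))) := by
    intro r hr
    obtain ⟨hr0, hr1⟩ := hr
    have hcirc : ∀ θ : ℝ, Complex.polarCoord.symm (r, θ) = circleMap 0 r θ := by
      intro θ
      simp [circleMap, Complex.exp_mul_I, ← Complex.ofReal_cos, ← Complex.ofReal_sin]
    have hper : Function.Periodic (fun θ : ℝ => F (r, θ)) (2 * π) := by
      intro θ
      simp only [hFdef, hcirc, periodic_circleMap 0 r θ]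
    have h1 : (∫ θ in Set.Ioo (-π) π, F (r, θ)) = ∫ θ in (-π)..π, F (r, θ) := by
      rw [intervalIntegral.integral_of_le (by linarith), integral_Ioc_eq_integral_Ioo]
    have h2 : (∫ θ in (-π)..π, F (r, θ)) = ∫ θ in (0:ℝ)..(0 + 2*π), F (r, θ) := by
      have := hper.intervalIntegral_add_eq (-π) 0
      rwa [show -π + 2*π = π from by ring] at this
    -- identify with a circle integral
    have habs : ∀ θ : ℝ, ‖circleMap 0 r θ‖ = r := by
      intro θ; rw [norm_circleMap_zero, _root_.abs_of_pos hr0]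
    have hw0 : ‖c * (r:ℂ)^2‖ < r := by
      rw [norm_mul, norm_pow, Complex.norm_real, Real.norm_eq_abs, _root_.abs_of_pos hr0]
      nlinarith [norm_nonneg c]
    have h3 : (∫ θ in (0:ℝ)..(0 + 2*π), F (r, θ))
        = r • ∮ z in C(0, r), (z - c * (r:ℂ)^2)⁻¹ •
            ((2 * b / ((starRingEnd ℂ) a) / Complex.I) * deriv L z) := by
      rw [zero_add, circleIntegral, ← intervalIntegral.integral_smul]
      apply intervalIntegral.integral_congr
      intro θ _
      simp only [hFdef, hcirc, deriv_circleMap, smul_eq_mul]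
      set z := circleMap 0 r θ with hz
      have hz0 : z ≠ 0 := by
        rw [hz]; exact circleMap_ne_center (ne_of_gt hr0)
      have hzw : z - c * (r:ℂ)^2 ≠ 0 := by
        intro h
        rw [sub_eq_zero] at h
        have := habs θ
        rw [← hz, h] at this
        rw [this] at hw0
        exact lt_irrefl _ hw0
      have hdz : (starRingEnd ℂ) a - b * (starRingEnd ℂ) z ≠ 0 :=
        hden z (by rw [habs θ]; linarith)
      have hconj : (starRingEnd ℂ) z = (r:ℂ)^2 / z := by
        rw [eq_div_iff hz0]
        have h4 : z * (starRingEnd ℂ) z = ((Complex.normSq z : ℝ) : ℂ) := Complex.mul_conj z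
        rw [mul_comm] at h4
        rw [h4, Complex.normSq_eq_norm_sq, habs θ]
        push_cast
        ring
      have e1 : (starRingEnd ℂ) a - b * (starRingEnd ℂ) z
          = ((starRingEnd ℂ) a * (z - c * (r:ℂ)^2)) / z := by
        rw [hconj, hcdef]; field_simp
      rw [hgdef]
      simp only
      rw [e1]
      field_simp
    rw [h1, h2, h3]
    congr 1
    have hdiff : DiffContOnCl ℂ (fun z => (2 * b / ((starRingEnd ℂ) a) / Complex.I) * deriv L z)
        (Metric.ball (0:ℂ) r) := by
      apply DifferentiableOn.diffContOnCl
      apply DifferentiableOn.const_mul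
      apply hD1.mono
      intro z hz
      apply hDU
      have h5 : z ∈ Metric.closedBall (0:ℂ) r :=
        closure_ball_subset_closedBall hz
      simp only [Metric.mem_closedBall, Complex.dist_eq, sub_zero] at h5
      simp only [Set.mem_setOf_eq]
      linarith
    have hwmem : c * (r:ℂ)^2 ∈ Metric.ball (0:ℂ) r := by
      simp only [Metric.mem_ball, Complex.dist_eq, sub_zero]
      exact hw0
    rw [hdiff.circleIntegral_sub_inv_smul hwmem]
    simp [smul_eq_mul]
  -- final computation via FTC
  have hmemU : ∀ x : ℝ, x ∈ Set.uIcc (0:ℝ) 1 → c * (x:ℂ)^2 ∈ U := by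
    intro x hx
    rw [Set.uIcc_of_le zero_le_one] at hx
    apply hDU
    simp only [Set.mem_setOf_eq, norm_mul, norm_pow, Complex.norm_real, Real.norm_eq_abs]
    rw [_root_.abs_of_nonneg hx.1]
    have hx2 : x^2 ≤ 1 := by nlinarith [hx.1, hx.2]
    nlinarith [mul_le_mul_of_nonneg_left hx2 (norm_nonneg c)]
  have hφ : ∀ x ∈ Set.uIcc (0:ℝ) 1, HasDerivAt (fun r : ℝ => L (c * (r:ℂ)^2))
      (deriv L (c * (x:ℂ)^2) * (c * (2*x))) x := by
    intro x hx
    have h1 : HasDerivAt (fun r : ℝ => c * (r:ℂ)^2) (c * (2*x)) x := by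
      have hof : HasDerivAt (fun r : ℝ => (r:ℂ)) 1 x := Complex.ofRealCLM.hasDerivAt
      have h1 := (hof.mul hof).const_mul c
      have h2 : (fun r : ℝ => c * (r:ℂ)^2) = fun r : ℝ => c * ((r:ℂ) * (r:ℂ)) := by
        funext r; ring
      rw [h2]
      exact h1.congr_deriv (by ring)
    have h2 : HasDerivAt L (deriv L (c * (x:ℂ)^2)) (c * (x:ℂ)^2) :=
      (hL.differentiableAt (hU.mem_nhds (hmemU x hx))).hasDerivAt
    exact h2.comp x h1
  have hintg : IntervalIntegrable (fun x : ℝ => deriv L (c * (x:ℂ)^2) * (c * (2*x)))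
      volume 0 1 := by
    apply ContinuousOn.intervalIntegrable
    apply ContinuousOn.mul
    · exact hC1.comp (by fun_prop) (fun x hx => hmemU x hx)
    · fun_prop
  calc
    (∫ w in {w : ℂ | ‖w‖ < 1}, g w)
        = ∫ w, (Metric.ball (0:ℂ) 1).indicator g w := by
          rw [hset, integral_indicator measurableSet_ball]
    _ = ∫ p in polarCoord.target, p.1 • (Metric.ball (0:ℂ) 1).indicator g
          (Complex.polarCoord.symm p) :=
        (Complex.integral_comp_polarCoord_symm _).symm
    _ = ∫ p in polarCoord.target,
          (Complex.polarCoord.symm ⁻¹' Metric.ball (0:ℂ) 1).indicator F p := by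
        apply setIntegral_congr_fun (by rw [polarCoord_target]; exact measurableSet_Ioi.prod measurableSet_Ioo)
        intro p _
        show p.1 • (Metric.ball (0:ℂ) 1).indicator g (Complex.polarCoord.symm p)
            = (Complex.polarCoord.symm ⁻¹' Metric.ball (0:ℂ) 1).indicator F p
        by_cases h : Complex.polarCoord.symm p ∈ Metric.ball (0:ℂ) 1
        · rw [Set.indicator_of_mem h, Set.indicator_of_mem (Set.mem_preimage.2 h)]
        · rw [Set.indicator_of_notMem h,
            Set.indicator_of_notMem (fun hc => h (Set.mem_preimage.1 hc)), smul_zero]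
    _ = ∫ p in polarCoord.target ∩ (Complex.polarCoord.symm ⁻¹' Metric.ball (0:ℂ) 1), F p :=
        setIntegral_indicator (hsymm_cont.measurable measurableSet_ball)
    _ = ∫ p in Set.Ioo (0:ℝ) 1 ×ˢ Set.Ioo (-π) π, F p := by rw [hsetEq]
    _ = ∫ r in Set.Ioo (0:ℝ) 1, ∫ θ in Set.Ioo (-π) π, F (r, θ) := by
        exact setIntegral_prod F hFint
    _ = ∫ r in Set.Ioo (0:ℝ) 1, r • ((2 * (π:ℝ) * Complex.I) *
          ((2 * b / ((starRingEnd ℂ) a) / Complex.I) * deriv L (c * (r:ℂ)^2))) :=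
        setIntegral_congr_fun measurableSet_Ioo key
    _ = ∫ r in (0:ℝ)..1, (2 * (π:ℝ) : ℂ) * (deriv L (c * (r:ℂ)^2) * (c * (2*r))) := by
        rw [intervalIntegral.integral_of_le zero_le_one, integral_Ioc_eq_integral_Ioo]
        apply setIntegral_congr_fun measurableSet_Ioo
        intro x _
        simp only [Complex.real_smul]
        generalize deriv L (c * (x:ℂ)^2) = d
        rw [hcdef]
        field_simp
    _ = (2 * (π:ℝ) : ℂ) * ∫ r in (0:ℝ)..1, deriv L (c * (r:ℂ)^2) * (c * (2*r)) :=
        intervalIntegral.integral_const_mul _ _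
    _ = 2 * (π:ℝ) * (L (b / (starRingEnd ℂ) a) - L 0) := by
        rw [intervalIntegral.integral_eq_sub_of_hasDerivAt hφ hintg]
        norm_num
        exact congrArg L hcdef
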